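/- Let T > 0, let h : ℝⁿ → ℝ be continuously differentiable, and let e : [0, T] → ℝⁿ be differentiable. Suppose α : ℝ → ℝ is locally Lipschitz, strictly increasing, and satisfies α(0) = 0, and suppose that for all t ∈ [0, T] the Lie-derivative condition ⟨∇h(e(t)), e'(t)⟩ ≥ −α(h(e(t))) holds. If e(0) belongs to the safe set 𝓔 = {e ∈ ℝⁿ : h(e) ≥ 0}, then e(t) ∈ 𝓔 for all t ∈ [0, T]. -/

import Mathlib

/-- **Forward invariance of the CBF safe set (Proposition 1).**
Let `h : ℝⁿ → ℝ` be continuously differentiable with safe set `𝓔 = {e | h e ≥ 0}`,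
let `e : [0, T] → ℝⁿ` be differentiable, and let `α` be a locally Lipschitz, strictly
increasing function with `α 0 = 0`. If `⟨∇h(e t), e' t⟩ ≥ -α (h (e t))` on `[0, T]` and
`e 0 ∈ 𝓔`, then `e t ∈ 𝓔` for all `t ∈ [0, T]`. -/
theorem cbf_safe_set_invariance
    (n : ℕ) (T : ℝ) (hT : 0 < T)
    (h : EuclideanSpace ℝ (Fin n) → ℝ)
    (hh : ContDiff ℝ 1 h)
    (e e' : ℝ → EuclideanSpace ℝ (Fin n))
    (he : ∀ t ∈ Set.Icc (0:ℝ) T, HasDerivAt e (e' t) t)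
    (α : ℝ → ℝ)
    (hα_lip : LocallyLipschitz α)
    (hα_mono : StrictMono α)
    (hα_zero : α 0 = 0)
    (hlie : ∀ t ∈ Set.Icc (0:ℝ) T,
      (inner ℝ (gradient h (e t)) (e' t) : ℝ) ≥ -α (h (e t)))
    (h0 : e 0 ∈ {x : EuclideanSpace ℝ (Fin n) | h x ≥ 0}) :
    ∀ t ∈ Set.Icc (0:ℝ) T, e t ∈ {x : EuclideanSpace ℝ (Fin n) | h x ≥ 0} := by
  set y : ℝ → ℝ := fun t => h (e t) with hy
  have hyder : ∀ t ∈ Set.Icc (0:ℝ) T,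
      HasDerivAt y (inner ℝ (gradient h (e t)) (e' t) : ℝ) t := by
    intro t ht
    have hdiff : DifferentiableAt ℝ h (e t) := (hh.differentiable one_ne_zero).differentiableAt
    have hg : HasGradientAt h (gradient h (e t)) (e t) := hdiff.hasGradientAt
    have := hg.hasFDerivAt.comp_hasDerivAt t (he t ht)
    simpa [InnerProductSpace.toDual_apply_apply, hy, Function.comp_def] using this
  intro t ht
  by_contra hneg
  simp only [Set.mem_setOf_eq, ge_iff_le, not_le] at hneg
  -- y t < 0
  have hycont : ContinuousOn y (Set.Icc 0 t) := by
    intro τ hτ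
    exact ((hyder τ ⟨hτ.1, hτ.2.trans ht.2⟩).continuousAt).continuousWithinAt
  set S : Set ℝ := {τ ∈ Set.Icc (0:ℝ) t | 0 ≤ y τ} with hS
  have hScomp : IsCompact S := by
    have hcl : IsClosed S := by
      have heq : S = Set.Icc 0 t ∩ y ⁻¹' Set.Ici 0 := by
        ext τ; simp [hS, Set.mem_setOf_eq, and_comm]
      rw [heq]
      exact hycont.preimage_isClosed_of_isClosed isClosed_Icc isClosed_Ici
    exact isCompact_Icc.of_isClosed_subset hcl (fun τ hτ => hτ.1)
  have hSne : S.Nonempty := ⟨0, ⟨le_rfl, ht.1⟩, h0⟩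
  have hsmem : sSup S ∈ S := hScomp.sSup_mem hSne
  set s := sSup S with hs
  obtain ⟨⟨hs0, hst⟩, hys⟩ := hsmem
  have hslt : s < t := lt_of_le_of_ne hst (by intro h2; rw [h2] at hys; linarith)
  have hsub : Set.Icc s t ⊆ Set.Icc 0 T :=
    Set.Icc_subset_Icc hs0 ht.2
  have hyneg : ∀ τ ∈ Set.Ioc s t, y τ < 0 := by
    intro τ hτ
    by_contra hc
    push_neg at hc
    have : τ ∈ S := ⟨⟨hs0.trans hτ.1.le, hτ.2⟩, hc⟩
    exact absurd (le_csSup ⟨t, fun x hx => hx.1.2⟩ this) (not_le.2 hτ.1)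
  have hmono : StrictMonoOn y (Set.Icc s t) := by
    apply strictMonoOn_of_hasDerivWithinAt_pos (convex_Icc s t)
      (fun τ hτ => ((hyder τ (hsub hτ)).continuousAt).continuousWithinAt)
      (f' := fun τ => (inner ℝ (gradient h (e τ)) (e' τ) : ℝ))
    · intro τ hτ
      rw [interior_Icc] at hτ
      exact ((hyder τ (hsub ⟨hτ.1.le, hτ.2.le⟩)).hasDerivWithinAt)
    · intro τ hτ
      rw [interior_Icc] at hτ
      have hτT : τ ∈ Set.Icc (0:ℝ) T := hsub ⟨hτ.1.le, hτ.2.le⟩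
      have hyτ : y τ < 0 := hyneg τ ⟨hτ.1, hτ.2.le⟩
      have : α (y τ) < 0 := hα_zero ▸ hα_mono hyτ
      have := hlie τ hτT
      linarith
  have : y s < y t := hmono ⟨le_rfl, hslt.le⟩ ⟨hslt.le, le_rfl⟩ hslt
  linarith
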